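/- Let X be a real Banach space, x₀ ∈ X, R > 0, and let A satisfy the variable Lipschitz condition on B[x₀,R] with a continuous nonnegative function k on [0,R]. Set a = ‖A x₀ − x₀‖, a₊(r) = a + ∫₀^r k(t) dt, assume a₊ has a fixed point in [0,R], and let r* be its smallest fixed point in [0,R]. Define r₀ = 0, r_{n+1} = a₊(r_n), and x_{n+1} = A x_n starting from x₀. Then the sequence (x_n) converges to a point x* with A x* = x*, ‖x* − x₀‖ ≤ r*, and the a priori error estimate ‖x* − x_n‖ ≤ r* − r_n holds for all n. -/

import Mathlib

lemma majorization_key_step {X : Type*} [NormedAddCommGroup X] [NormedSpace ℝ X]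
    (x₀ : X) (R : ℝ) (A : X → X) (k : ℝ → ℝ)
    (hk_cont : ContinuousOn k (Set.Icc 0 R))
    (hk_nonneg : ∀ t ∈ Set.Icc (0 : ℝ) R, 0 ≤ k t)
    (hLip : ∀ x₁ x₂ : X, ∀ r : ℝ, ‖x₁ - x₀‖ ≤ r → ‖x₂ - x₀‖ ≤ r →
      0 < r → r ≤ R → ‖A x₁ - A x₂‖ ≤ k r * ‖x₁ - x₂‖)
    (u v : X) (p q : ℝ) (hp : 0 ≤ p) (hpq : p ≤ q) (hqR : q ≤ R)
    (hu : ‖u - x₀‖ ≤ p) (hv : ‖v - x₀‖ ≤ q) (huv : ‖v - u‖ ≤ q - p) :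
    ‖A v - A u‖ ≤ ∫ t in p..q, k t := by
  have hIntOn : ∀ a b : ℝ, a ∈ Set.Icc (0:ℝ) R → b ∈ Set.Icc (0:ℝ) R →
      IntervalIntegrable k MeasureTheory.volume a b := by
    intro a b haM hbM
    exact (hk_cont.mono (Set.uIcc_subset_Icc haM hbM)).intervalIntegrable
  rcases eq_or_lt_of_le hpq with hpq' | hpq'
  · subst hpq'
    have hvu : v = u := by
      have h0 : ‖v - u‖ ≤ 0 := by linarith
      exact sub_eq_zero.mp (norm_le_zero_iff.mp h0)
    rw [hvu, sub_self, intervalIntegral.integral_same, norm_zero]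
  · -- p < q, so q > 0
    have hq0 : 0 < q := lt_of_le_of_lt hp hpq'
    refine le_of_forall_pos_le_add ?_
    intro ε hε
    set ε' : ℝ := ε / (q - p) with hε'def
    have hε'pos : 0 < ε' := div_pos hε (by linarith)
    -- uniform continuity
    have hUC : UniformContinuousOn k (Set.Icc 0 R) :=
      isCompact_Icc.uniformContinuousOn_of_continuous hk_cont
    rw [Metric.uniformContinuousOn_iff] at hUC
    obtain ⟨δ, hδpos, hδ⟩ := hUC ε' hε'pos
    obtain ⟨N, hN⟩ := exists_nat_gt ((q - p) / δ)
    have hNpos : 0 < (N : ℝ) := lt_of_le_of_lt (div_nonneg (by linarith) hδpos.le) hN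
    have hNnat : 0 < N := by exact_mod_cast hNpos
    set h : ℝ := (q - p) / N with hhdef
    have hh0 : 0 < h := div_pos (by linarith) hNpos
    have hhδ : h < δ := by
      rw [hhdef, div_lt_iff₀ hNpos]
      calc q - p = ((q-p)/δ) * δ := by field_simp
        _ < N * δ := by exact mul_lt_mul_of_pos_right hN hδpos
        _ = δ * N := mul_comm _ _
    set ρ : ℕ → ℝ := fun i => p + i * h with hρdef
    have hρ0 : ρ 0 = p := by simp [hρdef]
    have hρN : ρ N = q := by
      simp only [hρdef, hhdef]
      field_simp
      ring
    have hρmono : ∀ i j : ℕ, i ≤ j → ρ i ≤ ρ j := by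
      intro i j hij
      simp only [hρdef]
      have : (i:ℝ) ≤ j := by exact_mod_cast hij
      nlinarith
    have hρmem : ∀ i : ℕ, i ≤ N → ρ i ∈ Set.Icc (0:ℝ) R := by
      intro i hi
      constructor
      · have : p ≤ ρ i := hρmono 0 i (Nat.zero_le _) |>.trans_eq' hρ0
        linarith
      · have : ρ i ≤ ρ N := hρmono i N hi
        rw [hρN] at this; linarith
    set y : ℕ → X := fun i => u + ((i : ℝ)/N) • (v - u) with hydef
    have hy0 : y 0 = u := by simp [hydef]
    have hyN : y N = v := by
      simp only [hydef]
      rw [div_self (ne_of_gt hNpos), one_smul]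
      abel
    have hynorm : ∀ i : ℕ, i ≤ N → ‖y i - x₀‖ ≤ ρ i := by
      intro i hi
      have hfrac0 : 0 ≤ (i:ℝ)/N := div_nonneg (Nat.cast_nonneg _) hNpos.le
      have hfrac1 : (i:ℝ)/N ≤ 1 := by
        rw [div_le_one hNpos]; exact_mod_cast hi
      calc ‖y i - x₀‖ = ‖(u - x₀) + ((i:ℝ)/N) • (v - u)‖ := by
            simp only [hydef]; ring_nf; rw [add_sub_right_comm]
        _ ≤ ‖u - x₀‖ + ‖((i:ℝ)/N) • (v - u)‖ := norm_add_le _ _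
        _ = ‖u - x₀‖ + ((i:ℝ)/N) * ‖v - u‖ := by rw [norm_smul, Real.norm_of_nonneg hfrac0]
        _ ≤ p + ((i:ℝ)/N) * (q - p) := by
            have := mul_le_mul_of_nonneg_left huv hfrac0
            linarith
        _ = ρ i := by
            simp only [hρdef, hhdef]; ring
    have hydiff : ∀ i : ℕ, y (i+1) - y i = ((1:ℝ)/N) • (v - u) := by
      intro i
      simp only [hydef]
      rw [add_sub_add_left_eq_sub, ← sub_smul]
      congr 1
      push_cast
      ring
    have hydiffnorm : ∀ i : ℕ, ‖y (i+1) - y i‖ ≤ h := by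
      intro i
      rw [hydiff i, norm_smul, Real.norm_of_nonneg (by positivity)]
      calc (1/(N:ℝ)) * ‖v - u‖ ≤ (1/N) * (q - p) := by
            apply mul_le_mul_of_nonneg_left huv (by positivity)
        _ = h := by rw [hhdef]; ring
    -- per-step Lipschitz bound
    have hstep : ∀ i : ℕ, i < N → ‖A (y (i+1)) - A (y i)‖ ≤ k (ρ (i+1)) * h := by
      intro i hi
      have hi1 : i + 1 ≤ N := hi
      have hρpos : 0 < ρ (i+1) := by
        have : ρ 1 ≤ ρ (i+1) := hρmono 1 (i+1) (by omega)
        have h1 : ρ 1 = p + h := by simp [hρdef]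
        nlinarith
      have hb1 : ‖y (i+1) - x₀‖ ≤ ρ (i+1) := hynorm _ hi1
      have hb2 : ‖y i - x₀‖ ≤ ρ (i+1) := (hynorm i (by omega)).trans (hρmono i (i+1) (by omega))
      have := hLip (y (i+1)) (y i) (ρ (i+1)) hb1 hb2 hρpos (hρmem _ hi1).2
      refine this.trans ?_
      have hknn : 0 ≤ k (ρ (i+1)) := hk_nonneg _ (hρmem _ hi1)
      exact mul_le_mul_of_nonneg_left (hydiffnorm i) hknn
    -- per-step integral lower bound
    have hint : ∀ i : ℕ, i < N →
        k (ρ (i+1)) * h ≤ (∫ t in (ρ i)..(ρ (i+1)), k t) + ε' * h := by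
      intro i hi
      have hi1 : i + 1 ≤ N := hi
      have hmemi := hρmem i (by omega)
      have hmemi1 := hρmem (i+1) hi1
      have hle : ρ i ≤ ρ (i+1) := hρmono i (i+1) (by omega)
      have hconst : ∫ t in (ρ i)..(ρ (i+1)), (k (ρ (i+1)) - ε') =
          (k (ρ (i+1)) - ε') * h := by
        rw [intervalIntegral.integral_const, smul_eq_mul]
        have : ρ (i+1) - ρ i = h := by simp only [hρdef]; push_cast; ring
        rw [this, mul_comm]
      have hmono : (∫ t in (ρ i)..(ρ (i+1)), (k (ρ (i+1)) - ε')) ≤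
          ∫ t in (ρ i)..(ρ (i+1)), k t := by
        apply intervalIntegral.integral_mono_on hle
          (intervalIntegrable_const) (hIntOn _ _ hmemi hmemi1)
        intro t ht
        have htM : t ∈ Set.Icc (0:ℝ) R :=
          ⟨hmemi.1.trans ht.1, ht.2.trans hmemi1.2⟩
        have hdist : dist t (ρ (i+1)) < δ := by
          rw [Real.dist_eq, abs_of_nonpos (by linarith [ht.2])]
          have : ρ (i+1) - ρ i = h := by simp only [hρdef]; push_cast; ring
          have := ht.1
          linarith [hhδ]
        have := hδ t htM (ρ (i+1)) hmemi1 hdist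
        rw [Real.dist_eq, abs_lt] at this
        linarith [this.1]
      nlinarith [hmono, hconst]
    -- assemble
    have htel : A v - A u = ∑ i ∈ Finset.range N, (A (y (i+1)) - A (y i)) := by
      rw [Finset.sum_range_sub (fun i => A (y i)) N, hy0, hyN]
    calc ‖A v - A u‖ = ‖∑ i ∈ Finset.range N, (A (y (i+1)) - A (y i))‖ := by rw [htel]
      _ ≤ ∑ i ∈ Finset.range N, ‖A (y (i+1)) - A (y i)‖ := norm_sum_le _ _
      _ ≤ ∑ i ∈ Finset.range N, (k (ρ (i+1)) * h) := by
          apply Finset.sum_le_sum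
          intro i hi
          exact hstep i (Finset.mem_range.mp hi)
      _ ≤ ∑ i ∈ Finset.range N, ((∫ t in (ρ i)..(ρ (i+1)), k t) + ε' * h) := by
          apply Finset.sum_le_sum
          intro i hi
          exact hint i (Finset.mem_range.mp hi)
      _ = (∑ i ∈ Finset.range N, ∫ t in (ρ i)..(ρ (i+1)), k t) + N * (ε' * h) := by
          rw [Finset.sum_add_distrib, Finset.sum_const, Finset.card_range, nsmul_eq_mul]
      _ = (∫ t in p..q, k t) + ε := by
          rw [intervalIntegral.sum_integral_adjacent_intervals (fun i hi =>
            hIntOn _ _ (hρmem i (by omega)) (hρmem (i+1) hi))]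
          rw [hρ0, hρN]
          congr 1
          have hne1 : q - p ≠ 0 := by linarith
          have hne2 : (N:ℝ) ≠ 0 := ne_of_gt hNpos
          rw [hε'def, hhdef]
          field_simp

/-- Existence part of the majorization fixed point principle: the successive
approximations `x_{n+1} = A x_n` converge to a fixed point `x*` of `A` with
`‖x* - x₀‖ ≤ r*`, together with the a priori error estimate
`‖x* - x_n‖ ≤ r* - r_n`. -/
theorem majorization_fixed_point_existence
    {X : Type*} [NormedAddCommGroup X] [NormedSpace ℝ X] [CompleteSpace X]
    (x₀ : X) (R : ℝ) (hR : 0 < R) (A : X → X) (k : ℝ → ℝ)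
    (hk_cont : ContinuousOn k (Set.Icc 0 R))
    (hk_nonneg : ∀ t ∈ Set.Icc (0 : ℝ) R, 0 ≤ k t)
    (hLip : ∀ x₁ x₂ : X, ∀ r : ℝ, ‖x₁ - x₀‖ ≤ r → ‖x₂ - x₀‖ ≤ r →
      0 < r → r ≤ R → ‖A x₁ - A x₂‖ ≤ k r * ‖x₁ - x₂‖)
    (a : ℝ) (ha : a = ‖A x₀ - x₀‖)
    (aplus : ℝ → ℝ) (haplus : ∀ r : ℝ, aplus r = a + ∫ t in (0 : ℝ)..r, k t)
    (rstar : ℝ) (hrstar_mem : rstar ∈ Set.Icc (0 : ℝ) R)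
    (hrstar_fix : aplus rstar = rstar)
    (hrstar_min : ∀ s ∈ Set.Icc (0 : ℝ) R, aplus s = s → rstar ≤ s)
    (r : ℕ → ℝ) (hr0 : r 0 = 0) (hr_succ : ∀ n : ℕ, r (n + 1) = aplus (r n))
    (x : ℕ → X) (hx0 : x 0 = x₀) (hx_succ : ∀ n : ℕ, x (n + 1) = A (x n)) :
    ∃ xstar : X, Filter.Tendsto x Filter.atTop (nhds xstar) ∧
      A xstar = xstar ∧ ‖xstar - x₀‖ ≤ rstar ∧
      ∀ n : ℕ, ‖xstar - x n‖ ≤ rstar - r n := by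
  have hIntOn : ∀ s t : ℝ, s ∈ Set.Icc (0:ℝ) R → t ∈ Set.Icc (0:ℝ) R →
      IntervalIntegrable k MeasureTheory.volume s t := fun s t hs ht =>
    (hk_cont.mono (Set.uIcc_subset_Icc hs ht)).intervalIntegrable
  -- monotonicity of aplus on [0,R]
  have haplus_diff : ∀ s t : ℝ, s ∈ Set.Icc (0:ℝ) R → t ∈ Set.Icc (0:ℝ) R →
      aplus t - aplus s = ∫ u in s..t, k u := by
    intro s t hs ht
    rw [haplus, haplus]
    have := intervalIntegral.integral_add_adjacent_intervals
      (hIntOn 0 s ⟨le_refl 0, hR.le⟩ hs) (hIntOn s t hs ht)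
    linarith
  have haplus_mono : ∀ s t : ℝ, s ∈ Set.Icc (0:ℝ) R → t ∈ Set.Icc (0:ℝ) R →
      s ≤ t → aplus s ≤ aplus t := by
    intro s t hs ht hst
    have hd := haplus_diff s t hs ht
    have : 0 ≤ ∫ u in s..t, k u := by
      apply intervalIntegral.integral_nonneg hst
      intro u hu
      exact hk_nonneg u ⟨hs.1.trans hu.1, hu.2.trans ht.2⟩
    linarith
  have ha_nonneg : 0 ≤ a := ha ▸ norm_nonneg _
  have hrstar0 : 0 ≤ rstar := hrstar_mem.1
  have hrstarR : rstar ≤ R := hrstar_mem.2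
  -- r sequence facts
  have haplus0 : aplus 0 = a := by rw [haplus]; simp
  have hrfacts : ∀ n : ℕ, 0 ≤ r n ∧ r n ≤ r (n+1) ∧ r (n+1) ≤ rstar := by
    intro n
    induction n with
    | zero =>
      refine ⟨hr0.ge, ?_, ?_⟩
      · rw [hr0, hr_succ, hr0, haplus0]; exact ha_nonneg
      · rw [hr_succ, hr0, ← hrstar_fix]
        exact haplus_mono 0 rstar ⟨le_refl 0, hR.le⟩ hrstar_mem hrstar0
    | succ n ih =>
      obtain ⟨h1, h2, h3⟩ := ih
      have hmem1 : r (n+1) ∈ Set.Icc (0:ℝ) R := ⟨h1.trans h2, h3.trans hrstarR⟩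
      have hmemn : r n ∈ Set.Icc (0:ℝ) R := ⟨h1, (h2.trans h3).trans hrstarR⟩
      refine ⟨h1.trans h2, ?_, ?_⟩
      · have hmm := haplus_mono _ _ hmemn hmem1 h2
        rwa [← hr_succ n, ← hr_succ (n+1)] at hmm
      · rw [hr_succ (n+1), ← hrstar_fix]
        exact haplus_mono _ _ hmem1 hrstar_mem h3
  have hr_nonneg : ∀ n, 0 ≤ r n := fun n => (hrfacts n).1
  have hr_le_rstar : ∀ n, r n ≤ rstar := by
    intro n
    cases n with
    | zero => rw [hr0]; exact hrstar0
    | succ m => exact (hrfacts m).2.2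
  have hr_mono : Monotone r := monotone_nat_of_le_succ (fun n => (hrfacts n).2.1)
  have hr_mem : ∀ n, r n ∈ Set.Icc (0:ℝ) R :=
    fun n => ⟨hr_nonneg n, (hr_le_rstar n).trans hrstarR⟩
  -- x sequence facts
  have hxfacts : ∀ n : ℕ, ‖x (n+1) - x n‖ ≤ r (n+1) - r n ∧ ‖x n - x₀‖ ≤ r n := by
    intro n
    induction n with
    | zero =>
      constructor
      · rw [hx_succ, hx0, hr_succ, hr0, haplus0]; linarith [ha.ge]
      · rw [hx0, hr0, sub_self, norm_zero]
    | succ n ih =>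
      obtain ⟨ih1, ih2⟩ := ih
      have hxn1 : ‖x (n+1) - x₀‖ ≤ r (n+1) := by
        calc ‖x (n+1) - x₀‖ = ‖(x (n+1) - x n) + (x n - x₀)‖ := by abel_nf
          _ ≤ ‖x (n+1) - x n‖ + ‖x n - x₀‖ := norm_add_le _ _
          _ ≤ r (n+1) := by linarith
      constructor
      · have hk := majorization_key_step x₀ R A k hk_cont hk_nonneg hLip
          (x n) (x (n+1)) (r n) (r (n+1)) (hr_nonneg n) ((hrfacts n).2.1)
          (hr_mem (n+1)).2 ih2 hxn1 ih1
        have heq : x (n+1+1) - x (n+1) = A (x (n+1)) - A (x n) := by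
          rw [hx_succ (n+1), hx_succ n]
        rw [heq]
        refine hk.trans ?_
        have hd := haplus_diff _ _ (hr_mem n) (hr_mem (n+1))
        rw [← hr_succ (n+1), ← hr_succ n] at hd
        linarith [hd.ge]
      · exact hxn1
  -- distance bounds between iterates
  have hxdist : ∀ n m : ℕ, n ≤ m → ‖x m - x n‖ ≤ r m - r n := by
    intro n m hnm
    induction m with
    | zero =>
      have : n = 0 := Nat.le_zero.mp hnm
      subst this; simp
    | succ m ih =>
      rcases Nat.lt_or_ge n (m+1) with hlt | hge
      · have hnm' : n ≤ m := Nat.lt_succ_iff.mp hlt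
        calc ‖x (m+1) - x n‖ = ‖(x (m+1) - x m) + (x m - x n)‖ := by abel_nf
          _ ≤ ‖x (m+1) - x m‖ + ‖x m - x n‖ := norm_add_le _ _
          _ ≤ (r (m+1) - r m) + (r m - r n) := add_le_add (hxfacts m).1 (ih hnm')
          _ = r (m+1) - r n := by ring
      · have : n = m + 1 := le_antisymm hnm hge
        subst this; simp
  -- limit of r
  have hr_bdd : BddAbove (Set.range r) := ⟨rstar, fun _ ⟨n, hn⟩ => hn ▸ hr_le_rstar n⟩
  set L : ℝ := ⨆ n, r n with hLdef
  have hr_tendsto : Filter.Tendsto r Filter.atTop (nhds L) :=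
    tendsto_atTop_ciSup hr_mono hr_bdd
  have hL_le : L ≤ rstar := ciSup_le hr_le_rstar
  have hL_mem : L ∈ Set.Icc (0:ℝ) R :=
    ⟨le_ciSup_of_le hr_bdd 0 (hr_nonneg 0), hL_le.trans hrstarR⟩
  -- aplus continuous on [0,R], hence L is a fixed point
  have haplus_cont : ContinuousOn aplus (Set.Icc 0 R) := by
    have h1 : ContinuousOn (fun s => a + ∫ t in (0:ℝ)..s, k t) (Set.Icc 0 R) := by
      apply ContinuousOn.add continuousOn_const
      have := intervalIntegral.continuousOn_primitive_interval
        (f := k) (a := (0:ℝ)) (b := R) (μ := MeasureTheory.volume) ?_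
      · rwa [Set.uIcc_of_le hR.le] at this
      · rw [Set.uIcc_of_le hR.le]
        exact hk_cont.integrableOn_Icc
    exact h1.congr (fun s _ => haplus s)
  have hL_fix : aplus L = L := by
    have htend1 : Filter.Tendsto (fun n => aplus (r n)) Filter.atTop (nhds (aplus L)) := by
      have hwithin : Filter.Tendsto r Filter.atTop (nhdsWithin L (Set.Icc 0 R)) := by
        rw [tendsto_nhdsWithin_iff]
        exact ⟨hr_tendsto, Filter.Eventually.of_forall hr_mem⟩
      exact (haplus_cont L hL_mem).tendsto.comp hwithin
    have htend2 : Filter.Tendsto (fun n => aplus (r n)) Filter.atTop (nhds L) := by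
      have : (fun n => aplus (r n)) = fun n => r (n+1) := by
        funext n; rw [hr_succ]
      rw [this]
      exact hr_tendsto.comp (Filter.tendsto_add_atTop_nat 1)
    exact tendsto_nhds_unique htend1 htend2
  have hL_eq : L = rstar := le_antisymm hL_le (hrstar_min L hL_mem hL_fix)
  have hr_to_rstar : Filter.Tendsto r Filter.atTop (nhds rstar) := hL_eq ▸ hr_tendsto
  -- x is Cauchy
  have hcauchy : CauchySeq x := by
    apply cauchySeq_of_le_tendsto_0 (fun n => rstar - r n)
    · intro n m N hn hm
      rcases le_total n m with h | h
      · rw [dist_comm, dist_eq_norm]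
        calc ‖x m - x n‖ ≤ r m - r n := hxdist n m h
          _ ≤ rstar - r N := by
            have := hr_le_rstar m; have := hr_mono hn; linarith
      · rw [dist_eq_norm]
        calc ‖x n - x m‖ ≤ r n - r m := hxdist m n h
          _ ≤ rstar - r N := by
            have := hr_le_rstar n; have := hr_mono hm; linarith
    · have : Filter.Tendsto (fun n => rstar - r n) Filter.atTop (nhds (rstar - rstar)) :=
        tendsto_const_nhds.sub hr_to_rstar
      simpa using this
  obtain ⟨xstar, hx_tendsto⟩ := cauchySeq_tendsto_of_complete hcauchy
  -- error estimate
  have herr : ∀ n : ℕ, ‖xstar - x n‖ ≤ rstar - r n := by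
    intro n
    have hnorm_tend : Filter.Tendsto (fun m => ‖x m - x n‖) Filter.atTop
        (nhds ‖xstar - x n‖) := ((hx_tendsto.sub tendsto_const_nhds).norm)
    apply le_of_tendsto hnorm_tend
    filter_upwards [Filter.eventually_ge_atTop n] with m hm
    calc ‖x m - x n‖ ≤ r m - r n := hxdist n m hm
      _ ≤ rstar - r n := by linarith [hr_le_rstar m]
  have hxstar_ball : ‖xstar - x₀‖ ≤ rstar := by
    have := herr 0
    rwa [hx0, hr0, sub_zero] at this
  -- fixed point
  have hfix : A xstar = xstar := by
    have hxstar_R : ‖xstar - x₀‖ ≤ R := hxstar_ball.trans hrstarR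
    have hAx_tend : Filter.Tendsto (fun n => A (x n)) Filter.atTop (nhds (A xstar)) := by
      rw [tendsto_iff_dist_tendsto_zero]
      have hbound : ∀ n, dist (A (x n)) (A xstar) ≤ k R * ‖x n - xstar‖ := by
        intro n
        rw [dist_eq_norm]
        apply hLip (x n) xstar R ?_ hxstar_R hR (le_refl R)
        calc ‖x n - x₀‖ ≤ r n := (hxfacts n).2
          _ ≤ R := (hr_mem n).2
      have htendz : Filter.Tendsto (fun n => k R * ‖x n - xstar‖) Filter.atTop (nhds 0) := by
        have : Filter.Tendsto (fun n => ‖x n - xstar‖) Filter.atTop (nhds 0) := by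
          have := (hx_tendsto.sub (tendsto_const_nhds (x := xstar))).norm
          simpa using this
        simpa using this.const_mul (k R)
      exact squeeze_zero (fun n => dist_nonneg) hbound htendz
    have hAx_tend2 : Filter.Tendsto (fun n => A (x n)) Filter.atTop (nhds xstar) := by
      have : (fun n => A (x n)) = fun n => x (n+1) := by
        funext n; rw [hx_succ]
      rw [this]
      exact hx_tendsto.comp (Filter.tendsto_add_atTop_nat 1)
    exact tendsto_nhds_unique hAx_tend hAx_tend2
  exact ⟨xstar, hx_tendsto, hfix, hxstar_ball, herr⟩
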